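/- Let G=(V,w,m) be a finite connected weighted graph with m(V) = 1, Deg_max ≤ 1, and κ(x,y) ≥ K > 0 for all x ≠ y ∈ V. Let f : V → ℝ satisfy ⟨f⟩ = 0 and ‖∇f‖_∞ ≤ 1. Then for every λ ∈ ℝ, the exponential moment satisfies ⟨e^{λf}⟩ ≤ e^{λ²/(4K)}. -/

import Mathlib

open scoped BigOperators

/-- A weighted graph `G = (V, w, m)`: a symmetric edge-weight function `w`
vanishing on the diagonal, a positive vertex measure `m`, and local finiteness. -/
structure WeightedGraph (V : Type*) where
  w : V → V → ℝ
  m : V → ℝ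
  w_symm : ∀ x y, w x y = w y x
  w_nonneg : ∀ x y, 0 ≤ w x y
  w_diag : ∀ x, w x x = 0
  m_pos : ∀ x, 0 < m x
  locFin : ∀ x, {y | 0 < w x y}.Finite

namespace WeightedGraph

variable {V : Type*} (G : WeightedGraph V)

/-- Adjacency: `x ~ y` iff `w x y > 0`. -/
def Adj (x y : V) : Prop := 0 < G.w x y

/-- The underlying simple graph. -/
def toSimpleGraph : SimpleGraph V where
  Adj x y := 0 < G.w x y
  symm := by constructor; intro x y h; rw [G.w_symm y x]; exact h
  loopless := by constructor; intro x h; rw [G.w_diag] at h; exact lt_irrefl 0 h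

/-- Combinatorial graph distance. -/
noncomputable def d (x y : V) : ℕ := G.toSimpleGraph.dist x y

/-- Transition rate `q(x,y) = w(x,y)/m(x)`. -/
noncomputable def q (x y : V) : ℝ := G.w x y / G.m x

/-- The graph Laplacian `Δf(x) = Σ_y q(x,y) (f(y) - f(x))`. -/
noncomputable def lap (f : V → ℝ) (x : V) : ℝ := ∑ᶠ y, G.q x y * (f y - f x)

/-- The weighted vertex degree `Deg(x) = Σ_y q(x,y)`. -/
noncomputable def Deg (x : V) : ℝ := ∑ᶠ y, G.q x y

/-- The maximal weighted vertex degree. -/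
noncomputable def DegMax : ℝ := ⨆ x, G.Deg x

/-- The minimal transition rate over edges, `q_min = inf_{x ~ y} q(x,y)`. -/
noncomputable def qMin : ℝ := sInf {r : ℝ | ∃ x y, G.Adj x y ∧ r = G.q x y}

/-- `‖∇f‖_∞ = sup_{x ~ y} (f x - f y)/d(x,y)`. -/
noncomputable def gradNorm (f : V → ℝ) : ℝ :=
  sSup {r : ℝ | ∃ x y, G.Adj x y ∧ r = (f x - f y) / (G.d x y : ℝ)}

/-- The Ollivier curvature
`κ(x,y) = inf { ∇_{xy} Δf : ∇_{yx} f = 1, ‖∇f‖_∞ = 1 }`. -/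
noncomputable def kappa (x y : V) : ℝ :=
  sInf {r : ℝ | ∃ f : V → ℝ,
    (f y - f x) / (G.d y x : ℝ) = 1 ∧ G.gradNorm f = 1 ∧
    r = (G.lap f x - G.lap f y) / (G.d x y : ℝ)}

/-- A function is harmonic if `Δf = 0`. -/
def Harmonic (f : V → ℝ) : Prop := ∀ x, G.lap f x = 0

/-- A transport plan between `x₀ ≠ y₀`: a nonnegative function supported on
`B₁(x₀) × B₁(y₀)` whose marginals on the spheres `S₁(x₀)`, `S₁(y₀)` are
`q(x₀,·)` and `q(y₀,·)` respectively. -/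
def IsTransportPlan (x₀ y₀ : V) (ρ : V → V → ℝ) : Prop :=
  (∀ x y, 0 ≤ ρ x y) ∧
  (∀ x y, ρ x y ≠ 0 → G.d x₀ x ≤ 1 ∧ G.d y₀ y ≤ 1) ∧
  (∀ x, G.d x₀ x = 1 → ∑ᶠ y, ρ x y = G.q x₀ x) ∧
  (∀ y, G.d y₀ y = 1 → ∑ᶠ x, ρ x y = G.q y₀ y)

/-- The transport functional `Σ_{x,y} ρ(x,y) (1 - d(x,y)/d(x₀,y₀))`. -/
noncomputable def transportCost (x₀ y₀ : V) (ρ : V → V → ℝ) : ℝ :=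
  ∑ᶠ x, ∑ᶠ y, ρ x y * (1 - (G.d x y : ℝ) / (G.d x₀ y₀ : ℝ))

/-- An optimal transport plan attains the supremum of the transport functional. -/
def IsOptimalTransportPlan (x₀ y₀ : V) (ρ : V → V → ℝ) : Prop :=
  G.IsTransportPlan x₀ y₀ ρ ∧
  ∀ ρ' : V → V → ℝ, G.IsTransportPlan x₀ y₀ ρ' →
    G.transportCost x₀ y₀ ρ' ≤ G.transportCost x₀ y₀ ρ

end WeightedGraph

namespace WeightedGraph

variable {V : Type*} [Fintype V] (G : WeightedGraph V)

set_option linter.unusedSectionVars false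

lemma q_nonneg (x y : V) : 0 ≤ G.q x y := div_nonneg (G.w_nonneg x y) (G.m_pos x).le

lemma q_pos_iff {x y : V} : 0 < G.q x y ↔ G.Adj x y := by
  constructor
  · intro h
    by_contra hw
    have hw' : G.w x y ≤ 0 := not_lt.1 hw
    have : G.q x y ≤ 0 := div_nonpos_of_nonpos_of_nonneg hw' (G.m_pos x).le
    linarith
  · intro h; exact div_pos h (G.m_pos x)

lemma q_eq_zero_of_not_adj {x y : V} (h : ¬ G.Adj x y) : G.q x y = 0 := by
  rcases (G.q_nonneg x y).eq_or_lt with h0 | h0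
  · exact h0.symm
  · exact absurd (G.q_pos_iff.1 h0) h

lemma lap_eq_sum (f : V → ℝ) (x : V) : G.lap f x = ∑ y, G.q x y * (f y - f x) :=
  finsum_eq_sum_of_fintype _

lemma Deg_eq_sum (x : V) : G.Deg x = ∑ y, G.q x y := finsum_eq_sum_of_fintype _

lemma adj_symm {x y : V} (h : G.Adj x y) : G.Adj y x := by
  unfold Adj at *; rwa [G.w_symm y x]

lemma adj_ne {x y : V} (h : G.Adj x y) : x ≠ y := by
  intro he; subst he; unfold Adj at h; rw [G.w_diag] at h; exact lt_irrefl 0 h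

lemma d_eq_one {x y : V} (h : G.Adj x y) : G.d x y = 1 :=
  SimpleGraph.dist_eq_one_iff_adj.2 h

lemma lap_smul (c : ℝ) (f : V → ℝ) (x : V) :
    G.lap (fun z => c * f z) x = c * G.lap f x := by
  rw [lap_eq_sum, lap_eq_sum, Finset.mul_sum]
  exact Finset.sum_congr rfl (fun y _ => by ring)

lemma gradSet_bddAbove (f : V → ℝ) :
    BddAbove {r : ℝ | ∃ x y, G.Adj x y ∧ r = (f x - f y) / (G.d x y : ℝ)} := by
  apply Set.Finite.bddAbove
  apply (Set.finite_range (fun p : V × V => (f p.1 - f p.2) / (G.d p.1 p.2 : ℝ))).subset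
  rintro r ⟨x, y, _, rfl⟩
  exact ⟨(x, y), rfl⟩

lemma edge_le_gradNorm {f : V → ℝ} {x y : V} (h : G.Adj x y) :
    f x - f y ≤ G.gradNorm f := by
  have hmem : (f x - f y) / (G.d x y : ℝ) ∈
      {r : ℝ | ∃ x y, G.Adj x y ∧ r = (f x - f y) / (G.d x y : ℝ)} := ⟨x, y, h, rfl⟩
  have := le_csSup (G.gradSet_bddAbove f) hmem
  rwa [G.d_eq_one h, Nat.cast_one, div_one] at this

lemma gradNorm_nonneg {f : V → ℝ} (hne : ∃ a b, G.Adj a b) : 0 ≤ G.gradNorm f := by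
  obtain ⟨a, b, hab⟩ := hne
  have h1 := G.edge_le_gradNorm (f := f) hab
  have h2 := G.edge_le_gradNorm (f := f) (G.adj_symm hab)
  linarith

lemma gradNorm_le {f : V → ℝ} {c : ℝ} (hne : ∃ a b, G.Adj a b)
    (hc : ∀ x y, G.Adj x y → f x - f y ≤ c) : G.gradNorm f ≤ c := by
  apply csSup_le
  · obtain ⟨a, b, hab⟩ := hne
    exact ⟨(f a - f b) / (G.d a b : ℝ), a, b, hab, rfl⟩
  · rintro r ⟨x, y, h, rfl⟩
    rw [G.d_eq_one h, Nat.cast_one, div_one]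
    exact hc x y h

lemma sub_le_of_walk {f : V → ℝ} {L : ℝ} (hL : ∀ u v, G.Adj u v → f u - f v ≤ L)
    {u v : V} (p : G.toSimpleGraph.Walk u v) : f u - f v ≤ L * p.length := by
  induction p with
  | nil => simp
  | @cons a b c h p ih =>
    have h1 : f a - f b ≤ L := hL a b h
    have : (SimpleGraph.Walk.cons h p).length = p.length + 1 := SimpleGraph.Walk.length_cons h p
    rw [this]
    push_cast
    linarith

lemma dist_lip (hconn : G.toSimpleGraph.Connected) {f : V → ℝ} {L : ℝ}
    (hL : ∀ u v, G.Adj u v → f u - f v ≤ L) (u v : V) :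
    f u - f v ≤ L * (G.d u v : ℝ) := by
  obtain ⟨p, hp⟩ := hconn.exists_walk_length_eq_dist u v
  have := G.sub_le_of_walk hL p
  rwa [hp] at this

end WeightedGraph

namespace WeightedGraph

variable {V : Type*} [Fintype V] (G : WeightedGraph V)

set_option linter.unusedSectionVars false

lemma abs_lap_le {g : V → ℝ} (hg : ∀ u v, G.Adj u v → g u - g v ≤ 1) (z : V) :
    |G.lap g z| ≤ G.Deg z := by
  rw [lap_eq_sum, Deg_eq_sum]
  refine (Finset.abs_sum_le_sum_abs _ _).trans (Finset.sum_le_sum ?_)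
  intro u _
  rw [abs_mul, abs_of_nonneg (G.q_nonneg z u)]
  by_cases h : G.Adj z u
  · have h1 := hg u z (G.adj_symm h)
    have h2 := hg z u h
    have habs : |g u - g z| ≤ 1 := abs_le.2 ⟨by linarith, h1⟩
    calc G.q z u * |g u - g z| ≤ G.q z u * 1 :=
          mul_le_mul_of_nonneg_left habs (G.q_nonneg z u)
      _ = G.q z u := mul_one _
  · rw [G.q_eq_zero_of_not_adj h]; simp

lemma kappa_le (hDeg : ∀ x, G.Deg x ≤ 1) {x y : V} (hxy : G.Adj x y) {g : V → ℝ}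
    (h1 : (g y - g x) / (G.d y x : ℝ) = 1) (h2 : G.gradNorm g = 1) :
    G.kappa x y ≤ G.lap g x - G.lap g y := by
  have hd : G.d x y = 1 := G.d_eq_one hxy
  have hmem : G.lap g x - G.lap g y ∈ {r : ℝ | ∃ f : V → ℝ,
      (f y - f x) / (G.d y x : ℝ) = 1 ∧ G.gradNorm f = 1 ∧
      r = (G.lap f x - G.lap f y) / (G.d x y : ℝ)} :=
    ⟨g, h1, h2, by rw [hd, Nat.cast_one, div_one]⟩
  refine csInf_le ⟨-2, ?_⟩ hmem
  rintro r ⟨g', hg1, hg2, rfl⟩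
  have hedge : ∀ u v, G.Adj u v → g' u - g' v ≤ 1 := fun u v h => by
    have := G.edge_le_gradNorm (f := g') h; rwa [hg2] at this
  have hx := abs_le.1 (G.abs_lap_le hedge x)
  have hy := abs_le.1 (G.abs_lap_le hedge y)
  have hdx := hDeg x; have hdy := hDeg y
  rw [hd, Nat.cast_one, div_one]
  linarith [hx.1, hx.2, hy.1, hy.2]

lemma lap_curv (hconn : G.toSimpleGraph.Connected) (hDeg : ∀ x, G.Deg x ≤ 1)
    {K : ℝ} (hκ : ∀ x y : V, x ≠ y → K ≤ G.kappa x y)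
    {f : V → ℝ} {L : ℝ} (hL0 : 0 ≤ L)
    (hLip : ∀ u v, G.Adj u v → f u - f v ≤ L)
    {x y : V} (hxy : G.Adj x y) :
    K * L - 2 * (L - (f y - f x)) ≤ G.lap f x - G.lap f y := by
  rcases hL0.eq_or_lt with hL | hL
  · -- L = 0 : f is locally constant
    have hconst : ∀ u v, G.Adj u v → f u = f v := by
      intro u v huv
      have h1 := hLip u v huv
      have h2 := hLip v u (G.adj_symm huv)
      rw [← hL] at h1 h2; linarith
    have hlapz : ∀ z, G.lap f z = 0 := by
      intro z
      rw [lap_eq_sum]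
      apply Finset.sum_eq_zero
      intro u _
      by_cases h : G.Adj z u
      · rw [hconst u z (G.adj_symm h)]; ring
      · rw [G.q_eq_zero_of_not_adj h]; ring
    have hfy : f y = f x := hconst y x (G.adj_symm hxy)
    rw [hlapz x, hlapz y, hfy, ← hL]; norm_num
  · -- L > 0
    have hLne : L ≠ 0 := ne_of_gt hL
    set h : V → ℝ := fun z => f z / L with hh
    have hedge : ∀ u v, G.Adj u v → h u - h v ≤ 1 := by
      intro u v hu
      show f u / L - f v / L ≤ 1
      rw [div_sub_div_same, div_le_one hL]
      exact hLip u v hu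
    have hdist : ∀ u v : V, h u - h v ≤ (G.d u v : ℝ) := by
      intro u v
      have := G.dist_lip hconn hedge u v
      linarith [this]
    have hdyx : G.d y x = 1 := G.d_eq_one (G.adj_symm hxy)
    have hdxy : G.d x y = 1 := G.d_eq_one hxy
    have hdyy : G.d y y = 0 := SimpleGraph.dist_self
    set ht : V → ℝ := fun z => max (h z) (h x + 1 - (G.d y z : ℝ)) with hht
    have htx : ht x = h x := by
      show max (h x) (h x + 1 - (G.d y x : ℝ)) = h x
      rw [hdyx]; push_cast
      apply max_eq_left; linarith
    have hyx1 : h y - h x ≤ 1 := hedge y x (G.adj_symm hxy)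
    have hty : ht y = h x + 1 := by
      show max (h y) (h x + 1 - (G.d y y : ℝ)) = h x + 1
      rw [hdyy]; push_cast
      rw [sub_zero]
      apply max_eq_right; linarith
    have htedge : ∀ u v, G.Adj u v → ht u - ht v ≤ 1 := by
      intro u v huv
      have ha : h u ≤ ht v + 1 := by
        have := hedge u v huv
        have h2 : h v ≤ ht v := le_max_left _ _
        linarith
      have hb : h x + 1 - (G.d y u : ℝ) ≤ ht v + 1 := by
        have htri : G.d y v ≤ G.d y u + G.d u v := hconn.dist_triangle
        rw [G.d_eq_one huv] at htri
        have htri' : (G.d y v : ℝ) ≤ (G.d y u : ℝ) + 1 := by exact_mod_cast htri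
        have h2 : h x + 1 - (G.d y v : ℝ) ≤ ht v := le_max_right _ _
        linarith
      have : ht u ≤ ht v + 1 := max_le ha hb
      linarith
    have hgrad_ht : G.gradNorm ht = 1 := by
      apply le_antisymm
      · exact G.gradNorm_le ⟨x, y, hxy⟩ htedge
      · have hmem : (ht y - ht x) / (G.d y x : ℝ) ∈
            {r : ℝ | ∃ a b, G.Adj a b ∧ r = (ht a - ht b) / (G.d a b : ℝ)} :=
          ⟨y, x, G.adj_symm hxy, rfl⟩
        have := le_csSup (G.gradSet_bddAbove ht) hmem
        rw [hdyx, Nat.cast_one, div_one, hty, htx] at this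
        unfold gradNorm
        linarith
    have hslope : (ht y - ht x) / (G.d y x : ℝ) = 1 := by
      rw [hdyx, hty, htx]; norm_num
    have hkl := G.kappa_le hDeg hxy hslope hgrad_ht
    have hKk : K ≤ G.lap ht x - G.lap ht y := le_trans (hκ x y (G.adj_ne hxy)) hkl
    set ε : ℝ := 1 - (h y - h x) with hε
    have hε0 : 0 ≤ ε := by rw [hε]; linarith
    have hcmp : ∀ z, ht z - h z ≤ ε := by
      intro z
      have h1 : max (h z) (h x + 1 - (G.d y z : ℝ)) ≤ h z + ε := by
        apply max_le
        · linarith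
        · have := hdist y z; rw [hε]; linarith
      show max (h z) (h x + 1 - (G.d y z : ℝ)) - h z ≤ ε
      linarith
    have hge : ∀ z, h z ≤ ht z := fun z => le_max_left _ _
    have hlapx : G.lap ht x ≤ G.lap h x + ε := by
      rw [lap_eq_sum, lap_eq_sum]
      have hsum : ∀ u ∈ Finset.univ, G.q x u * (ht u - ht x) ≤
          G.q x u * (h u - h x) + G.q x u * ε := by
        intro u _
        have h1 : ht u - ht x ≤ (h u - h x) + ε := by
          have := hcmp u; rw [htx]; linarith
        nlinarith [G.q_nonneg x u]
      calc ∑ u, G.q x u * (ht u - ht x)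
          ≤ ∑ u, (G.q x u * (h u - h x) + G.q x u * ε) := Finset.sum_le_sum hsum
        _ = (∑ u, G.q x u * (h u - h x)) + (∑ u, G.q x u) * ε := by
            rw [Finset.sum_add_distrib, Finset.sum_mul]
        _ ≤ (∑ u, G.q x u * (h u - h x)) + ε := by
            have hdx : ∑ u, G.q x u ≤ 1 := by rw [← Deg_eq_sum]; exact hDeg x
            have hdx0 : (0:ℝ) ≤ ∑ u, G.q x u :=
              Finset.sum_nonneg fun u _ => G.q_nonneg x u
            nlinarith
    have hlapy : G.lap h y ≤ G.lap ht y + ε := by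
      rw [lap_eq_sum, lap_eq_sum]
      have h2 : ht y - h y = ε := by rw [hty, hε]; ring
      have hsum : ∀ u ∈ Finset.univ, G.q y u * (h u - h y) ≤
          G.q y u * (ht u - ht y) + G.q y u * ε := by
        intro u _
        have h1 : h u - h y ≤ (ht u - ht y) + ε := by
          have := hge u; linarith
        nlinarith [G.q_nonneg y u]
      calc ∑ u, G.q y u * (h u - h y)
          ≤ ∑ u, (G.q y u * (ht u - ht y) + G.q y u * ε) := Finset.sum_le_sum hsum
        _ = (∑ u, G.q y u * (ht u - ht y)) + (∑ u, G.q y u) * ε := by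
            rw [Finset.sum_add_distrib, Finset.sum_mul]
        _ ≤ (∑ u, G.q y u * (ht u - ht y)) + ε := by
            have hdy : ∑ u, G.q y u ≤ 1 := by rw [← Deg_eq_sum]; exact hDeg y
            have hdy0 : (0:ℝ) ≤ ∑ u, G.q y u :=
              Finset.sum_nonneg fun u _ => G.q_nonneg y u
            nlinarith
    have hKh : K - 2 * ε ≤ G.lap h x - G.lap h y := by linarith
    have hfx : G.lap f x = L * G.lap h x := by
      have hfe : f = fun z => L * h z := funext fun z => by
        show f z = L * (f z / L); field_simp
      calc G.lap f x = G.lap (fun z => L * h z) x := by rw [← hfe]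
        _ = L * G.lap h x := G.lap_smul L h x
    have hfy : G.lap f y = L * G.lap h y := by
      have hfe : f = fun z => L * h z := funext fun z => by
        show f z = L * (f z / L); field_simp
      calc G.lap f y = G.lap (fun z => L * h z) y := by rw [← hfe]
        _ = L * G.lap h y := G.lap_smul L h y
    have hfyx : f y - f x = L * (h y - h x) := by
      show f y - f x = L * (f y / L - f x / L); field_simp
    rw [hfx, hfy]
    have hmul := mul_le_mul_of_nonneg_left hKh hL0
    rw [hε] at hmul
    nlinarith [hmul]

end WeightedGraph

namespace WeightedGraph

variable {V : Type*} [Fintype V] (G : WeightedGraph V)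

set_option linter.unusedSectionVars false

lemma grad_contract (hconn : G.toSimpleGraph.Connected) (hDeg : ∀ x, G.Deg x ≤ 1)
    {K : ℝ} (hκ : ∀ x y : V, x ≠ y → K ≤ G.kappa x y)
    {f : V → ℝ} {L s : ℝ} (hL0 : 0 ≤ L) (hs0 : 0 ≤ s) (hs1 : s ≤ 1/2)
    (hne : ∃ a b, G.Adj a b)
    (hLip : ∀ u v, G.Adj u v → f u - f v ≤ L) :
    G.gradNorm (fun z => f z + s * G.lap f z) ≤ (1 - s * K) * L := by
  apply G.gradNorm_le hne
  intro u v huv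
  have hlow := G.lap_curv hconn hDeg hκ hL0 hLip (G.adj_symm huv)
  have ha : f u - f v ≤ L := hLip u v huv
  have h1 : s * (G.lap f u - G.lap f v) ≤ s * (2 * (L - (f u - f v)) - K * L) :=
    mul_le_mul_of_nonneg_left (by linarith [hlow]) hs0
  have h2 : (1 - 2 * s) * (f u - f v) ≤ (1 - 2 * s) * L :=
    mul_le_mul_of_nonneg_left ha (by linarith)
  show f u + s * G.lap f u - (f v + s * G.lap f v) ≤ (1 - s * K) * L
  nlinarith [h1, h2]

lemma m_mul_q (x y : V) : G.m x * G.q x y = G.w x y := by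
  unfold q
  rw [mul_comm]
  exact div_mul_cancel₀ _ (ne_of_gt (G.m_pos x))

lemma sum_w_eq (x : V) : ∑ y, G.w x y = G.m x * G.Deg x := by
  rw [Deg_eq_sum, Finset.mul_sum]
  exact Finset.sum_congr rfl fun y _ => (G.m_mul_q x y).symm

lemma sum_m_lap (f : V → ℝ) : ∑ x, G.m x * G.lap f x = 0 := by
  have hterm : ∀ x, G.m x * G.lap f x = ∑ y, (G.w x y * f y - G.w x y * f x) := by
    intro x
    rw [lap_eq_sum, Finset.mul_sum]
    refine Finset.sum_congr rfl fun y _ => ?_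
    rw [show G.m x * (G.q x y * (f y - f x)) = (G.m x * G.q x y) * (f y - f x) from by ring,
      G.m_mul_q]
    ring
  calc ∑ x, G.m x * G.lap f x
      = ∑ x, ∑ y, (G.w x y * f y - G.w x y * f x) :=
        Finset.sum_congr rfl fun x _ => hterm x
    _ = (∑ x, ∑ y, G.w x y * f y) - ∑ x, ∑ y, G.w x y * f x := by
        rw [← Finset.sum_sub_distrib]
        exact Finset.sum_congr rfl fun x _ => Finset.sum_sub_distrib _ _
    _ = 0 := by
        have hsw : (∑ x, ∑ y, G.w x y * f y) = ∑ x, ∑ y, G.w x y * f x := by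
          rw [Finset.sum_comm]
          exact Finset.sum_congr rfl fun x _ =>
            Finset.sum_congr rfl fun y _ => by rw [G.w_symm]
        rw [hsw, sub_self]

lemma sum_by_parts (u g : V → ℝ) :
    ∑ x, G.m x * (u x * G.lap g x) =
      -(1/2) * ∑ x, ∑ y, G.w x y * ((u x - u y) * (g x - g y)) := by
  have hterm : ∀ x, G.m x * (u x * G.lap g x) = ∑ y, G.w x y * (u x * (g y - g x)) := by
    intro x
    rw [lap_eq_sum, Finset.mul_sum, Finset.mul_sum]
    refine Finset.sum_congr rfl fun y _ => ?_
    rw [show G.m x * (u x * (G.q x y * (g y - g x))) = (G.m x * G.q x y) * (u x * (g y - g x))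
      from by ring, G.m_mul_q]
  set T := ∑ x, ∑ y, G.w x y * (u x * (g y - g x)) with hT
  have hL : ∑ x, G.m x * (u x * G.lap g x) = T :=
    Finset.sum_congr rfl fun x _ => hterm x
  have hswap : T = ∑ x, ∑ y, G.w x y * (u y * (g x - g y)) := by
    rw [hT, Finset.sum_comm]
    exact Finset.sum_congr rfl fun x _ =>
      Finset.sum_congr rfl fun y _ => by rw [G.w_symm]
  have h2T : T + T = ∑ x, ∑ y, -(G.w x y * ((u x - u y) * (g x - g y))) := by
    nth_rewrite 2 [hswap]
    rw [hT, ← Finset.sum_add_distrib]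
    refine Finset.sum_congr rfl fun x _ => ?_
    rw [← Finset.sum_add_distrib]
    exact Finset.sum_congr rfl fun y _ => by ring
  have h3 : ∑ x, ∑ y, -(G.w x y * ((u x - u y) * (g x - g y)))
      = -∑ x, ∑ y, G.w x y * ((u x - u y) * (g x - g y)) := by
    simp
  rw [hL]
  rw [h3] at h2T
  linarith [h2T]

lemma exp_slope_aux {t : ℝ} (ht : 0 ≤ t) : Real.exp t - 1 ≤ t * (Real.exp t + 1) / 2 := by
  set φ : ℝ → ℝ := fun u => u * Real.exp u + u - 2 * Real.exp u + 2 with hφ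
  have hderiv : ∀ u : ℝ, HasDerivAt φ (u * Real.exp u + 1 - Real.exp u) u := by
    intro u
    have h1 : HasDerivAt (fun w : ℝ => w * Real.exp w)
        (1 * Real.exp u + u * Real.exp u) u :=
      (hasDerivAt_id u).mul (Real.hasDerivAt_exp u)
    have h2 : HasDerivAt (fun w : ℝ => 2 * Real.exp w) (2 * Real.exp u) u :=
      (Real.hasDerivAt_exp u).const_mul 2
    have h3 := ((h1.add (hasDerivAt_id u)).sub h2).add_const 2
    exact h3.congr_deriv (by ring)
  have hmono : MonotoneOn φ (Set.Ici (0:ℝ)) := by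
    apply monotoneOn_of_deriv_nonneg (convex_Ici 0)
    · exact (Continuous.continuousOn (by continuity))
    · intro u _
      exact (hderiv u).differentiableAt.differentiableWithinAt
    · intro u hu
      rw [(hderiv u).deriv]
      have hu0 : 0 < u := by simpa using hu
      have hm : Real.exp (-u) * Real.exp u = 1 := by
        rw [← Real.exp_add]; norm_num
      nlinarith [hm, Real.add_one_le_exp (-u), Real.exp_pos u]
  have h0 : φ 0 ≤ φ t := hmono (by simp) (by simpa using ht) ht
  have hφ0 : φ 0 = 0 := by simp [hφ]
  have hφt : φ t = t * Real.exp t + t - 2 * Real.exp t + 2 := rfl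
  rw [hφ0, hφt] at h0
  linarith

lemma exp_slope (a b : ℝ) :
    (Real.exp a - Real.exp b) * (a - b) ≤ (a - b)^2 * ((Real.exp a + Real.exp b) / 2) := by
  rcases le_total b a with h | h
  · have ht := exp_slope_aux (t := a - b) (by linarith)
    have hb := Real.exp_pos b
    have hab : Real.exp b * Real.exp (a - b) = Real.exp a := by
      rw [← Real.exp_add]; ring_nf
    have hmul := mul_le_mul_of_nonneg_left ht hb.le
    have key : Real.exp a - Real.exp b ≤ (a - b) * (Real.exp a + Real.exp b) / 2 := by
      nlinarith [hmul, hab]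
    nlinarith [mul_le_mul_of_nonneg_right key (by linarith : (0:ℝ) ≤ a - b)]
  · have ht := exp_slope_aux (t := b - a) (by linarith)
    have hb := Real.exp_pos a
    have hab : Real.exp a * Real.exp (b - a) = Real.exp b := by
      rw [← Real.exp_add]; ring_nf
    have hmul := mul_le_mul_of_nonneg_left ht hb.le
    have key : Real.exp b - Real.exp a ≤ (b - a) * (Real.exp a + Real.exp b) / 2 := by
      nlinarith [hmul, hab]
    nlinarith [mul_le_mul_of_nonneg_right key (by linarith : (0:ℝ) ≤ b - a)]

lemma one_le_mul_exp {a : ℝ} (h0 : 0 ≤ a) (h4 : a ≤ 1/4) :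
    1 ≤ (1 - a) * Real.exp (a + a^2) := by
  have h1 : (1 + (a + a^2)/2)^2 ≤ Real.exp (a + a^2) := by
    have h2 := Real.add_one_le_exp ((a + a^2)/2)
    have hpos : (0:ℝ) ≤ 1 + (a + a^2)/2 := by positivity
    have hee : Real.exp ((a + a^2)/2) * Real.exp ((a + a^2)/2) = Real.exp (a + a^2) := by
      rw [← Real.exp_add]; ring_nf
    nlinarith [h2, hpos, hee]
  have h14 : (0:ℝ) ≤ 1 - a := by linarith
  have haa : a * a ≤ a / 4 := by nlinarith
  have haaa : a * a * a ≤ a / 16 := by nlinarith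
  nlinarith [mul_le_mul_of_nonneg_left h1 h14, haa, haaa, h0, h4, sq_nonneg a]

end WeightedGraph

namespace WeightedGraph

variable {V : Type*} [Fintype V] (G : WeightedGraph V)

set_option linter.unusedSectionVars false

lemma energy_step (hDeg : ∀ x, G.Deg x ≤ 1) (g : V → ℝ) {s C : ℝ} (hs : 0 ≤ s)
    (hC : ∀ u v, G.Adj u v → |g u - g v| ≤ C) :
    ∑ x, G.m x * Real.exp (g x) ≤
      (∑ x, G.m x * Real.exp (g x + s * G.lap g x))
      + s / 2 * C ^ 2 * ∑ x, G.m x * Real.exp (g x) := by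
  set E : V → ℝ := fun x => Real.exp (g x) with hE
  have hEpos : ∀ x, 0 < E x := fun x => Real.exp_pos (g x)
  have hpt : ∀ x, G.m x * E x - G.m x * Real.exp (g x + s * G.lap g x)
      ≤ -(s * (G.m x * (E x * G.lap g x))) := by
    intro x
    have h1 := Real.add_one_le_exp (s * G.lap g x)
    have h2 : Real.exp (g x + s * G.lap g x) = E x * Real.exp (s * G.lap g x) := by
      rw [hE]; simp only; rw [← Real.exp_add]
    have hm := (G.m_pos x).le
    nlinarith [mul_le_mul_of_nonneg_left h1 (mul_nonneg hm (hEpos x).le)]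
  have hsum1 : (∑ x, G.m x * E x) - (∑ x, G.m x * Real.exp (g x + s * G.lap g x))
      ≤ -(s * ∑ x, G.m x * (E x * G.lap g x)) := by
    calc (∑ x, G.m x * E x) - (∑ x, G.m x * Real.exp (g x + s * G.lap g x))
        = ∑ x, (G.m x * E x - G.m x * Real.exp (g x + s * G.lap g x)) :=
          (Finset.sum_sub_distrib _ _).symm
      _ ≤ ∑ x, -(s * (G.m x * (E x * G.lap g x))) :=
          Finset.sum_le_sum fun x _ => hpt x
      _ = ∑ x, (-s) * (G.m x * (E x * G.lap g x)) :=
          Finset.sum_congr rfl fun x _ => by ring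
      _ = (-s) * ∑ x, G.m x * (E x * G.lap g x) := (Finset.mul_sum _ _ _).symm
      _ = -(s * ∑ x, G.m x * (E x * G.lap g x)) := by ring
  have hparts := G.sum_by_parts E g
  set S := ∑ x, ∑ y, G.w x y * ((E x - E y) * (g x - g y)) with hS
  have hSbound : S ≤ C ^ 2 * ∑ x, G.m x * E x := by
    have hterm : ∀ x y, G.w x y * ((E x - E y) * (g x - g y))
        ≤ G.w x y * (C ^ 2 * ((E x + E y) / 2)) := by
      intro x y
      by_cases h : G.Adj x y
      · apply mul_le_mul_of_nonneg_left _ (G.w_nonneg x y)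
        have h1 := exp_slope (g x) (g y)
        have h2 : (g x - g y) ^ 2 ≤ C ^ 2 := by
          have := hC x y h
          nlinarith [abs_nonneg (g x - g y), sq_abs (g x - g y)]
        have h3 : 0 ≤ (E x + E y) / 2 := by positivity
        nlinarith [h1, h2, h3]
      · have hw : G.w x y = 0 := by
          rcases (G.w_nonneg x y).eq_or_lt with h0 | h0
          · exact h0.symm
          · exact absurd h0 h
        rw [hw]; simp
    have hsw : (∑ x, ∑ y, G.w x y * E y) = ∑ x, ∑ y, G.w x y * E x := by
      rw [Finset.sum_comm]
      exact Finset.sum_congr rfl fun x _ =>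
        Finset.sum_congr rfl fun y _ => by rw [G.w_symm]
    have hsplit : ∑ x, ∑ y, G.w x y * ((E x + E y) / 2)
        = ((∑ x, ∑ y, G.w x y * E x) + ∑ x, ∑ y, G.w x y * E y) / 2 := by
      rw [← Finset.sum_add_distrib, Finset.sum_div]
      refine Finset.sum_congr rfl fun x _ => ?_
      rw [← Finset.sum_add_distrib, Finset.sum_div]
      exact Finset.sum_congr rfl fun y _ => by ring
    have hinner : ∀ x, ∑ y, G.w x y * E x ≤ G.m x * E x := by
      intro x
      rw [← Finset.sum_mul, G.sum_w_eq]
      have h1 : G.m x * G.Deg x ≤ G.m x * 1 :=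
        mul_le_mul_of_nonneg_left (hDeg x) (G.m_pos x).le
      have h2 : G.m x * G.Deg x * E x ≤ G.m x * 1 * E x :=
        mul_le_mul_of_nonneg_right h1 (hEpos x).le
      rw [mul_one] at h2
      exact h2
    calc S ≤ ∑ x, ∑ y, G.w x y * (C ^ 2 * ((E x + E y) / 2)) :=
          Finset.sum_le_sum fun x _ => Finset.sum_le_sum fun y _ => hterm x y
      _ = C ^ 2 * ∑ x, ∑ y, G.w x y * ((E x + E y) / 2) := by
          rw [Finset.mul_sum]
          refine Finset.sum_congr rfl fun x _ => ?_
          rw [Finset.mul_sum]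
          exact Finset.sum_congr rfl fun y _ => by ring
      _ = C ^ 2 * ∑ x, ∑ y, G.w x y * E x := by
          rw [hsplit, hsw]; ring
      _ ≤ C ^ 2 * ∑ x, G.m x * E x := by
          apply mul_le_mul_of_nonneg_left _ (sq_nonneg C)
          exact Finset.sum_le_sum fun x _ => hinner x
  rw [hparts] at hsum1
  have hs2 : s / 2 * S ≤ s / 2 * (C ^ 2 * ∑ x, G.m x * E x) :=
    mul_le_mul_of_nonneg_left hSbound (by linarith)
  have hring : -(s * (-(1/2) * S)) = s / 2 * S := by ring
  rw [hring] at hsum1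
  have hgoal : ∑ x, G.m x * E x ≤ (∑ x, G.m x * Real.exp (g x + s * G.lap g x))
      + s / 2 * (C ^ 2 * ∑ x, G.m x * E x) := by linarith
  calc ∑ x, G.m x * Real.exp (g x)
      = ∑ x, G.m x * E x := rfl
    _ ≤ (∑ x, G.m x * Real.exp (g x + s * G.lap g x))
        + s / 2 * (C ^ 2 * ∑ x, G.m x * E x) := hgoal
    _ = (∑ x, G.m x * Real.exp (g x + s * G.lap g x))
        + s / 2 * C ^ 2 * ∑ x, G.m x * Real.exp (g x) := by rw [hE]; ring

end WeightedGraph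


set_option maxHeartbeats 1000000 in
/-- On a finite connected weighted graph with `m(V) = 1`,
`Deg_max ≤ 1`, and `κ(x,y) ≥ K > 0` for all `x ≠ y`: if `⟨f⟩ = 0` and
`‖∇f‖_∞ ≤ 1`, then for every `λ ∈ ℝ`, `⟨e^{λf}⟩ ≤ e^{λ²/(4K)}`. -/
theorem exponential_moment_bound
    {V : Type*} [Fintype V] (G : WeightedGraph V)
    (hconn : G.toSimpleGraph.Connected)
    (hm : ∑ x : V, G.m x = 1)
    (hDeg : ∀ x, G.Deg x ≤ 1)
    (K : ℝ) (hK : 0 < K)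
    (hκ : ∀ x y : V, x ≠ y → K ≤ G.kappa x y)
    (f : V → ℝ)
    (hmean : ∑ x : V, G.m x * f x = 0)
    (hgrad : G.gradNorm f ≤ 1) :
    ∀ lam : ℝ,
      ∑ x : V, G.m x * Real.exp (lam * f x) ≤ Real.exp (lam ^ 2 / (4 * K)) := by
  intro lam
  classical
  haveI hVne : Nonempty V := hconn.nonempty
  have hexp1 : (1:ℝ) ≤ Real.exp (lam ^ 2 / (4 * K)) :=
    Real.one_le_exp (by positivity)
  rcases subsingleton_or_nontrivial V with hsub | hnt
  · -- subsingleton case : f ≡ 0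
    have hf0 : ∀ x, f x = 0 := by
      intro x
      have h1 : ∀ y : V, f y = f x := fun y => by rw [Subsingleton.elim y x]
      have h2 : ∑ y, G.m y * f y = (∑ y, G.m y) * f x := by
        rw [Finset.sum_mul]
        exact Finset.sum_congr rfl fun y _ => by rw [h1 y]
      rw [hmean, hm, one_mul] at h2
      exact h2.symm
    calc ∑ x, G.m x * Real.exp (lam * f x)
        = ∑ x, G.m x := Finset.sum_congr rfl fun x _ => by
          rw [hf0 x, mul_zero, Real.exp_zero, mul_one]
      _ = 1 := hm
      _ ≤ _ := hexp1
  · -- main case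
    have hedges : ∃ a b, G.Adj a b := by
      obtain ⟨a, b, hab⟩ := exists_pair_ne V
      obtain ⟨p⟩ := hconn.preconnected a b
      cases p with
      | nil => exact absurd rfl hab
      | cons h q => exact ⟨a, _, h⟩
    set D : ℕ := Finset.univ.sup (fun p : V × V => G.d p.1 p.2) with hD
    have hDle : ∀ u v : V, G.d u v ≤ D := fun u v =>
      Finset.le_sup (f := fun p : V × V => G.d p.1 p.2) (Finset.mem_univ (u, v))
    -- reduce to: ∀ c > lam²/(4K), the bound holds with exp c
    suffices hsuff : ∀ c : ℝ, lam ^ 2 / (4 * K) < c →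
        ∑ x, G.m x * Real.exp (lam * f x) ≤ Real.exp c by
      by_contra hcon
      push_neg at hcon
      have hΦpos : 0 < ∑ x, G.m x * Real.exp (lam * f x) :=
        Finset.sum_pos (fun x _ => mul_pos (G.m_pos x) (Real.exp_pos _))
          Finset.univ_nonempty
      have hlt : lam ^ 2 / (4 * K) < Real.log (∑ x, G.m x * Real.exp (lam * f x)) :=
        (Real.lt_log_iff_exp_lt hΦpos).2 hcon
      set c := (lam ^ 2 / (4 * K) + Real.log (∑ x, G.m x * Real.exp (lam * f x))) / 2 with hc
      have h1 : lam ^ 2 / (4 * K) < c := by rw [hc]; linarith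
      have h2 : c < Real.log (∑ x, G.m x * Real.exp (lam * f x)) := by rw [hc]; linarith
      have h3 := hsuff c h1
      have h4 : Real.exp c < ∑ x, G.m x * Real.exp (lam * f x) := by
        have := Real.exp_lt_exp.2 h2
        rwa [Real.exp_log hΦpos] at this
      linarith
    intro c hc
    -- choose a small time step s
    obtain ⟨s, ⟨hψs, hsδ⟩, hs0⟩ : ∃ s : ℝ,
        ((1 + s * lam ^ 2 / 2) * (lam ^ 2 / (2 * K * (2 - s * K))) < c ∧
          s < min (1/2) (min (1/K) (1/(2 * lam ^ 2 + 2)))) ∧ s ∈ Set.Ioi (0:ℝ) := by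
      have hδpos : (0:ℝ) < min (1/2) (min (1/K) (1/(2 * lam ^ 2 + 2))) := by
        refine lt_min (by norm_num) (lt_min (by positivity) (by positivity))
      have hcont : ContinuousAt
          (fun s : ℝ => (1 + s * lam ^ 2 / 2) * (lam ^ 2 / (2 * K * (2 - s * K)))) 0 := by
        apply ContinuousAt.mul
        · fun_prop
        · apply ContinuousAt.div
          · fun_prop
          · fun_prop
          · show 2 * K * (2 - 0 * K) ≠ 0
            have : 2 * K * (2 - 0 * K) = 4 * K := by ring
            rw [this]; positivity
      have hval : (1 + 0 * lam ^ 2 / 2) * (lam ^ 2 / (2 * K * (2 - 0 * K)))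
          = lam ^ 2 / (4 * K) := by
        rw [show 2 * K * (2 - 0 * K) = 4 * K from by ring]; ring
      have htend := hcont.tendsto
      rw [hval] at htend
      have hev1 := htend.eventually (eventually_lt_nhds hc)
      have hev2 := eventually_lt_nhds hδpos
      have hev := ((hev1.and hev2).filter_mono (nhdsWithin_le_nhds (s := Set.Ioi (0:ℝ)))).and
        eventually_mem_nhdsWithin
      exact hev.exists
    rw [Set.mem_Ioi] at hs0
    have hs12 : s ≤ 1/2 := (lt_min_iff.1 hsδ).1.le
    have hsK1 : s * K ≤ 1 := by
      have h1 : s < 1/K := (lt_min_iff.1 (lt_min_iff.1 hsδ).2).1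
      have := mul_le_mul_of_nonneg_right h1.le hK.le
      rwa [one_div, inv_mul_cancel₀ (ne_of_gt hK)] at this
    have hsK0 : 0 < s * K := mul_pos hs0 hK
    have hsa : s * lam ^ 2 / 2 ≤ 1/4 := by
      have h1 : s ≤ 1/(2 * lam ^ 2 + 2) := (lt_min_iff.1 (lt_min_iff.1 hsδ).2).2.le
      have hpos : (0:ℝ) < 2 * lam ^ 2 + 2 := by positivity
      have h2 := mul_le_mul_of_nonneg_right h1 (sq_nonneg lam)
      have h3 : 1/(2 * lam ^ 2 + 2) * lam ^ 2 ≤ 1/2 := by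
        rw [div_mul_eq_mul_div, one_mul, div_le_div_iff₀ hpos two_pos]
        nlinarith [sq_nonneg lam]
      linarith
    -- the heat-semigroup iteration
    set T : (V → ℝ) → (V → ℝ) := fun g z => g z + s * G.lap g z with hT
    set F : ℕ → V → ℝ := fun n => T^[n] f with hF
    have hF0 : F 0 = f := rfl
    have hFfun : ∀ n, F (n+1) = fun z => F n z + s * G.lap (F n) z := fun n =>
      Function.iterate_succ_apply' T n f
    have hFpt : ∀ n x, F (n+1) x = F n x + s * G.lap (F n) x := fun n x =>
      congrFun (hFfun n) x
    clear_value T F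
    set r : ℝ := 1 - s * K with hr
    have hr0 : 0 ≤ r := by rw [hr]; linarith
    have hr1 : r < 1 := by rw [hr]; linarith
    have hgradF : ∀ n, G.gradNorm (F n) ≤ r ^ n := by
      intro n; induction n with
      | zero => rw [hF0]; simpa using hgrad
      | succ n ih =>
        have hLip : ∀ u v, G.Adj u v → F n u - F n v ≤ r ^ n := fun u v h =>
          le_trans (G.edge_le_gradNorm h) ih
        have hcontr := G.grad_contract hconn hDeg hκ (pow_nonneg hr0 n) hs0.le hs12
          hedges hLip
        calc G.gradNorm (F (n+1)) = G.gradNorm (fun z => F n z + s * G.lap (F n) z) := by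
              rw [hFfun n]
          _ ≤ (1 - s * K) * r ^ n := hcontr
          _ = r ^ (n+1) := by rw [hr]; ring
    have hedgeF : ∀ n u v, G.Adj u v → |F n u - F n v| ≤ r ^ n := by
      intro n u v h
      have h1 := le_trans (G.edge_le_gradNorm h) (hgradF n)
      have h2 := le_trans (G.edge_le_gradNorm (G.adj_symm h)) (hgradF n)
      exact abs_le.2 ⟨by linarith, h1⟩
    have hmeanF : ∀ n, ∑ x, G.m x * F n x = 0 := by
      intro n; induction n with
      | zero => rw [hF0]; exact hmean
      | succ n ih =>
        have hterm : ∀ x, G.m x * F (n+1) x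
            = G.m x * F n x + s * (G.m x * G.lap (F n) x) := by
          intro x; rw [hFpt n x]; ring
        calc ∑ x, G.m x * F (n+1) x
            = ∑ x, (G.m x * F n x + s * (G.m x * G.lap (F n) x)) :=
              Finset.sum_congr rfl fun x _ => hterm x
          _ = (∑ x, G.m x * F n x) + s * ∑ x, G.m x * G.lap (F n) x := by
              rw [Finset.sum_add_distrib, ← Finset.mul_sum]
          _ = 0 := by rw [ih, G.sum_m_lap]; ring
    have hLipF : ∀ n u v, G.Adj u v → F n u - F n v ≤ r ^ n := fun n u v h =>
      le_trans (G.edge_le_gradNorm h) (hgradF n)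
    have hsupF : ∀ n x, |F n x| ≤ r ^ n * D := by
      intro n x
      have hrn : 0 ≤ r ^ n := pow_nonneg hr0 n
      have hle : ∃ z, F n z ≤ 0 := by
        by_contra hcl; push_neg at hcl
        have : 0 < ∑ x, G.m x * F n x :=
          Finset.sum_pos (fun x _ => mul_pos (G.m_pos x) (hcl x)) Finset.univ_nonempty
        rw [hmeanF n] at this; exact lt_irrefl 0 this
      have hge : ∃ z, 0 ≤ F n z := by
        by_contra hcl; push_neg at hcl
        have : 0 < ∑ x, G.m x * (-(F n x)) :=
          Finset.sum_pos (fun x _ => mul_pos (G.m_pos x) (by linarith [hcl x]))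
            Finset.univ_nonempty
        have h2 : ∑ x, G.m x * (-(F n x)) = -∑ x, G.m x * F n x := by
          rw [← Finset.sum_neg_distrib]
          exact Finset.sum_congr rfl fun x _ => by ring
        rw [h2, hmeanF n] at this
        simp at this
      obtain ⟨z0, hz0⟩ := hle
      obtain ⟨z1, hz1⟩ := hge
      have h1 : F n x - F n z0 ≤ r ^ n * (G.d x z0 : ℝ) := G.dist_lip hconn (hLipF n) x z0
      have h2 : F n z1 - F n x ≤ r ^ n * (G.d z1 x : ℝ) := G.dist_lip hconn (hLipF n) z1 x
      have hd1 : (G.d x z0 : ℝ) ≤ (D : ℝ) := by exact_mod_cast hDle x z0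
      have hd2 : (G.d z1 x : ℝ) ≤ (D : ℝ) := by exact_mod_cast hDle z1 x
      rw [abs_le]
      constructor
      · nlinarith [mul_le_mul_of_nonneg_left hd2 hrn]
      · nlinarith [mul_le_mul_of_nonneg_left hd1 hrn]
    set Φ : ℕ → ℝ := fun n => ∑ x, G.m x * Real.exp (lam * F n x) with hΦ
    have hΦpos : ∀ n, 0 < Φ n := fun n =>
      Finset.sum_pos (fun x _ => mul_pos (G.m_pos x) (Real.exp_pos _)) Finset.univ_nonempty
    set a : ℕ → ℝ := fun n => s * lam ^ 2 / 2 * (r ^ n) ^ 2 with ha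
    clear_value Φ a
    have ha0 : ∀ n, 0 ≤ a n := by
      intro n; rw [ha]; positivity
    have hsl0 : 0 ≤ s * lam ^ 2 / 2 := by positivity
    have han : ∀ n, a n ≤ s * lam ^ 2 / 2 := by
      intro n; rw [ha]
      have hrn : 0 ≤ r ^ n := pow_nonneg hr0 n
      have h1 : r ^ n ≤ 1 := pow_le_one₀ hr0 hr1.le
      have h2 : (r ^ n) ^ 2 ≤ 1 := by
        calc (r ^ n) ^ 2 ≤ 1 ^ 2 := pow_le_pow_left₀ hrn h1 2
          _ = 1 := one_pow 2
      have h3 : s * lam ^ 2 / 2 * (r ^ n) ^ 2 ≤ s * lam ^ 2 / 2 * 1 :=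
        mul_le_mul_of_nonneg_left h2 hsl0
      simpa using h3
    have ha14 : ∀ n, a n ≤ 1/4 := fun n => le_trans (han n) hsa
    have hstep : ∀ n, Φ n ≤ Φ (n+1) + a n * Φ n := by
      intro n
      set g : V → ℝ := fun x => lam * F n x with hg
      have hC : ∀ u v, G.Adj u v → |g u - g v| ≤ |lam| * r ^ n := by
        intro u v h
        rw [hg]
        show |lam * F n u - lam * F n v| ≤ |lam| * r ^ n
        rw [← mul_sub, abs_mul]
        exact mul_le_mul_of_nonneg_left (hedgeF n u v h) (abs_nonneg lam)
      have hes := G.energy_step hDeg g hs0.le hC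
      have hid : ∀ x, g x + s * G.lap g x = lam * F (n+1) x := by
        intro x
        rw [hg, hFpt n x]
        show lam * F n x + s * G.lap (fun z => lam * F n z) x
          = lam * (F n x + s * G.lap (F n) x)
        rw [G.lap_smul lam (F n) x]
        ring
      have e1 : ∑ x, G.m x * Real.exp (g x + s * G.lap g x) = Φ (n+1) := by
        rw [hΦ]
        exact Finset.sum_congr rfl fun x _ => by rw [hid x]
      have e0 : ∑ x, G.m x * Real.exp (g x) = Φ n := by
        rw [hΦ, hg]
      rw [e0, e1] at hes
      have heq : s / 2 * (|lam| * r ^ n) ^ 2 = a n := by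
        rw [ha, mul_pow, sq_abs]; ring
      rw [heq] at hes
      exact hes
    have hstep2 : ∀ n, Φ n ≤ Φ (n+1) * Real.exp (a n + (a n) ^ 2) := by
      intro n
      have h1 : Φ n * (1 - a n) ≤ Φ (n+1) := by nlinarith [hstep n]
      have h2 := WeightedGraph.one_le_mul_exp (ha0 n) (ha14 n)
      have h3 : Φ n * 1 ≤ Φ n * ((1 - a n) * Real.exp (a n + (a n) ^ 2)) :=
        mul_le_mul_of_nonneg_left h2 (hΦpos n).le
      have h4 : Φ n * (1 - a n) * Real.exp (a n + (a n) ^ 2)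
          ≤ Φ (n+1) * Real.exp (a n + (a n) ^ 2) :=
        mul_le_mul_of_nonneg_right h1 (Real.exp_pos _).le
      calc Φ n = Φ n * 1 := (mul_one _).symm
        _ ≤ Φ n * ((1 - a n) * Real.exp (a n + (a n) ^ 2)) := h3
        _ = Φ n * (1 - a n) * Real.exp (a n + (a n) ^ 2) := by ring
        _ ≤ Φ (n+1) * Real.exp (a n + (a n) ^ 2) := h4
    have hiter : ∀ N, Φ 0 ≤ Φ N * Real.exp (∑ n ∈ Finset.range N, (a n + (a n) ^ 2)) := by
      intro N; induction N with
      | zero => simp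
      | succ N ih =>
        calc Φ 0 ≤ Φ N * Real.exp (∑ n ∈ Finset.range N, (a n + (a n) ^ 2)) := ih
          _ ≤ (Φ (N+1) * Real.exp (a N + (a N) ^ 2))
              * Real.exp (∑ n ∈ Finset.range N, (a n + (a n) ^ 2)) :=
            mul_le_mul_of_nonneg_right (hstep2 N) (Real.exp_pos _).le
          _ = Φ (N+1) * Real.exp (a N + (a N) ^ 2)
              * Real.exp (∑ n ∈ Finset.range N, (a n + (a n) ^ 2)) := by ring
          _ = Φ (N+1) * Real.exp (∑ n ∈ Finset.range (N+1), (a n + (a n) ^ 2)) := by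
            conv_rhs => rw [Finset.sum_range_succ, Real.exp_add]
            ring
    have hsum_b : ∀ N, ∑ n ∈ Finset.range N, (a n + (a n) ^ 2) ≤ c := by
      intro N
      have hbn : ∀ n, a n + (a n) ^ 2 ≤ (1 + s * lam ^ 2 / 2) * a n := by
        intro n
        have h1 := han n
        have h2 := ha0 n
        nlinarith
      have hr2 : r ^ 2 < 1 := by nlinarith
      have hr20 : 0 ≤ r ^ 2 := sq_nonneg r
      have hgeom : ∑ n ∈ Finset.range N, (r ^ 2) ^ n ≤ 1 / (1 - r ^ 2) := by
        rw [geom_sum_eq (ne_of_lt hr2) N]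
        have hpos : 0 < 1 - r ^ 2 := by linarith
        have hne1 : r ^ 2 - 1 ≠ 0 := by intro h; rw [sub_eq_zero] at h; exact (ne_of_lt hr2) h
        have key : ((r ^ 2) ^ N - 1) / (r ^ 2 - 1) = (1 - (r ^ 2) ^ N) / (1 - r ^ 2) := by
          rw [div_eq_div_iff hne1 (ne_of_gt hpos)]; ring
        rw [key, div_le_div_iff₀ hpos hpos]
        nlinarith [pow_nonneg hr20 N]
      have hae : ∀ n, a n = s * lam ^ 2 / 2 * (r ^ 2) ^ n := by
        intro n; simp only [ha]; rw [← pow_mul, ← pow_mul, Nat.mul_comm]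
      have hAs : 0 ≤ 1 + s * lam ^ 2 / 2 := by positivity
      have hsl0 : 0 ≤ s * lam ^ 2 / 2 := by positivity
      calc ∑ n ∈ Finset.range N, (a n + (a n) ^ 2)
          ≤ ∑ n ∈ Finset.range N, (1 + s * lam ^ 2 / 2) * a n :=
            Finset.sum_le_sum fun n _ => hbn n
        _ = (1 + s * lam ^ 2 / 2) * (s * lam ^ 2 / 2) * ∑ n ∈ Finset.range N, (r ^ 2) ^ n := by
            rw [Finset.mul_sum]
            exact Finset.sum_congr rfl fun n _ => by rw [hae n]; ring
        _ ≤ (1 + s * lam ^ 2 / 2) * (s * lam ^ 2 / 2) * (1 / (1 - r ^ 2)) :=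
            mul_le_mul_of_nonneg_left hgeom (mul_nonneg hAs hsl0)
        _ = (1 + s * lam ^ 2 / 2) * (lam ^ 2 / (2 * K * (2 - s * K))) := by
            have h1 : 1 - r ^ 2 = s * K * (2 - s * K) := by rw [hr]; ring
            rw [h1]
            have hs' : s ≠ 0 := ne_of_gt hs0
            have hK' : K ≠ 0 := ne_of_gt hK
            have h2 : (2 - s * K) ≠ 0 := by intro h; nlinarith
            field_simp
        _ ≤ c := hψs.le
    have hle : ∀ N, Φ 0 ≤ Φ N * Real.exp c := by
      intro N
      refine le_trans (hiter N) (mul_le_mul_of_nonneg_left ?_ (hΦpos N).le)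
      exact Real.exp_le_exp.2 (hsum_b N)
    -- limit N → ∞
    have hFx : ∀ x, Filter.Tendsto (fun N => F N x) Filter.atTop (nhds 0) := by
      intro x
      have hg : Filter.Tendsto (fun N => r ^ N * (D : ℝ)) Filter.atTop (nhds 0) := by
        have := (tendsto_pow_atTop_nhds_zero_of_lt_one hr0 hr1).mul_const (D : ℝ)
        simpa using this
      exact squeeze_zero_norm (fun N => by simpa [Real.norm_eq_abs] using hsupF N x) hg
    have hΦtend : Filter.Tendsto Φ Filter.atTop (nhds 1) := by
      have h1 : Filter.Tendsto Φ Filter.atTop (nhds (∑ x, G.m x * Real.exp (lam * 0))) := by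
        rw [hΦ]
        apply tendsto_finset_sum
        intro x _
        apply Filter.Tendsto.const_mul
        exact (Real.continuous_exp.tendsto _).comp ((hFx x).const_mul lam)
      simpa [hm] using h1
    have htend2 : Filter.Tendsto (fun N => Φ N * Real.exp c) Filter.atTop
        (nhds (1 * Real.exp c)) := hΦtend.mul_const _
    have hfinal : Φ 0 ≤ 1 * Real.exp c :=
      ge_of_tendsto htend2 (Filter.Eventually.of_forall hle)
    rw [one_mul] at hfinal
    have hid0 : Φ 0 = ∑ x, G.m x * Real.exp (lam * f x) := by
      simp only [hΦ, hF0]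
    rw [hid0] at hfinal
    exact hfinal
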